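/- Let Q be a quiver of type A_n and let c = (c_{ij})_{1 ≤ i ≤ j ≤ n} be a point of the cone L_PBW(Q). Then for every left component X of Q, with T_z(X) = {x_1,...,x_k} and notation as in the definition: c_{i_1, j_1} ≤ c_{i_1+1, j_1+1} and c_{i_k, j_k} ≥ c_{i_k+1, j_k+1}; and for every right component X (in the case where both slices are complete): c_{i_1, j_1} ≥ c_{i_1+1, j_1+1} and c_{i_k, j_k} ≤ c_{i_k+1, j_k+1}. -/
import Mathlib


attribute [local instance] Classical.propDecidable

/-- Position of the `m`-th vertex (0-based; quiver vertex `m+1`) of the slice `S_z` of the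
translation quiver `ℕQ_k`, as a positive root `(i, j) ↔ α_i + ... + α_j`.  The slice starts
at `(z, z)` and moves according to the orientation `ε` of the edges of the quiver `Q`
(`ε m = true` means edge `m` is oriented to the right, `false` to the left). -/
def slicePos (ε : ℕ → Bool) (z : ℕ) : ℕ → ℤ × ℤ
  | 0 => ((z : ℤ), (z : ℤ))
  | m + 1 =>
    let p := slicePos ε z m
    if ε (m + 1) then (p.1, p.2 + 1) else (p.1 - 1, p.2)

/-- The `m`-th vertex of the slice `S_z` lies in the Auslander–Reiten quiver `A(Q_k)`,
i.e. it is a genuine positive root of `A_n` (so it belongs to `T_z = S_z ∩ A(Q_k)`). -/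
def inRange (n : ℕ) (ε : ℕ → Bool) (z m : ℕ) : Prop :=
  1 ≤ (slicePos ε z m).1 ∧ (slicePos ε z m).2 ≤ (n : ℤ)

/-- Edges `e, e+1, ..., e'` of the quiver form a left component: all oriented left,
maximal among such. -/
def IsLeftComp (n : ℕ) (ε : ℕ → Bool) (e e' : ℕ) : Prop :=
  1 ≤ e ∧ e ≤ e' ∧ e' ≤ n - 1 ∧ (∀ m, e ≤ m → m ≤ e' → ε m = false) ∧
    (2 ≤ e → ε (e - 1) = true) ∧ (e' + 1 ≤ n - 1 → ε (e' + 1) = true)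

/-- Edges `e, e+1, ..., e'` of the quiver form a right component: all oriented right,
maximal among such. -/
def IsRightComp (n : ℕ) (ε : ℕ → Bool) (e e' : ℕ) : Prop :=
  1 ≤ e ∧ e ≤ e' ∧ e' ≤ n - 1 ∧ (∀ m, e ≤ m → m ≤ e' → ε m = true) ∧
    (2 ≤ e → ε (e - 1) = false) ∧ (e' + 1 ≤ n - 1 → ε (e' + 1) = false)

/-- Both slices `T_z(X)` and `T_{z+1}(X)` of the component `X` with edges `e..e'` are
complete, i.e. `S_z(X) = T_z(X)` and `S_{z+1}(X) = T_{z+1}(X)`. -/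
def SlicesComplete (n : ℕ) (ε : ℕ → Bool) (e e' z : ℕ) : Prop :=
  ∀ m ∈ Finset.Icc (e - 1) e', inRange n ε z m ∧ inRange n ε (z + 1) m

/-- Membership in the cone `L_PBW(Q)` (Section 7 of the paper): the inequalities
(L1)–(L6).  Here the component `X` has edges `e..e'`, its part of the slice `T_z` is
`{slicePos ε z m : e - 1 ≤ m ≤ e'}` (intersected with `A(Q_k)`), and the vertex `y_t` of
`T_{z+1}(X)` corresponding to `x_t = slicePos ε z m` is `slicePos ε (z+1) m`
(the root shifted by `(1,1)`). -/
def MemLPBW (n : ℕ) (ε : ℕ → Bool) (c : ℤ × ℤ → ℤ) : Prop :=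
  -- (L1)
  (∀ e e' z, IsLeftComp n ε e e' → 1 ≤ z → z + 1 ≤ n → SlicesComplete n ε e e' z →
    ∑ m ∈ Finset.Icc (e - 1) e', c (slicePos ε (z + 1) m) ≤
      ∑ m ∈ Finset.Icc (e - 1) e', c (slicePos ε z m)) ∧
  -- (L2)
  (∀ e e' z m, IsLeftComp n ε e e' → 1 ≤ z → z + 1 ≤ n → e ≤ m → m + 1 ≤ e' →
    inRange n ε z m → inRange n ε z (m + 1) →
    c (slicePos ε z m) ≤ c (slicePos ε (z + 1) m)) ∧
  -- (L3)
  (∀ e e' z, IsRightComp n ε e e' → 1 ≤ z → z + 1 ≤ n → SlicesComplete n ε e e' z →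
    ∑ m ∈ Finset.Icc (e - 1) e', c (slicePos ε z m) ≤
      ∑ m ∈ Finset.Icc (e - 1) e', c (slicePos ε (z + 1) m)) ∧
  -- (L4)
  (∀ e e' z m, IsRightComp n ε e e' → 1 ≤ z → z + 1 ≤ n → e ≤ m → m + 1 ≤ e' →
    inRange n ε (z + 1) m → inRange n ε (z + 1) (m + 1) →
    c (slicePos ε (z + 1) m) ≤ c (slicePos ε z m)) ∧
  -- (L5): leftmost component a left component
  (∀ e', IsLeftComp n ε 1 e' → ∀ z, 1 ≤ z → z + 1 ≤ n →
    c (slicePos ε z 0) ≤ c (slicePos ε (z + 1) 0)) ∧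
  -- (L6): leftmost component a right component
  (∀ e', IsRightComp n ε 1 e' → ∀ z, 1 ≤ z → z + 1 ≤ n →
    c (slicePos ε (z + 1) 0) ≤ c (slicePos ε z 0))

/-- Membership in the degeneration cone `C_PBW(Q)` (Section 6 of the paper):
inequalities (C1) and (C2). -/
def MemCPBW (n : ℕ) (ε : ℕ → Bool) (c : ℤ × ℤ → ℤ) : Prop :=
  -- (C1)
  (∀ e e' z m₀, IsLeftComp n ε e e' → 1 ≤ z → z + 1 ≤ n → SlicesComplete n ε e e' z →
    e - 1 ≤ m₀ → m₀ ≤ e' →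
    ∑ m ∈ Finset.Icc m₀ e', c (slicePos ε (z + 1) m) ≤
      ∑ m ∈ Finset.Icc m₀ e', c (slicePos ε z m)) ∧
  -- (C2)
  (∀ e e' z m, IsRightComp n ε e e' → 1 ≤ z → z + 1 ≤ n → e - 1 ≤ m → m + 1 ≤ e' →
    inRange n ε z m → inRange n ε (z + 1) (m + 1) →
    c (slicePos ε (z + 1) m) ≤ c (slicePos ε z m))

lemma slicePos_fst_le (ε : ℕ → Bool) (z : ℕ) {m' m : ℕ} (h : m' ≤ m) :
    (slicePos ε z m).1 ≤ (slicePos ε z m').1 := by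
  induction m with
  | zero => simp [Nat.le_zero.mp h]
  | succ k ih =>
    rcases Nat.lt_or_ge m' (k + 1) with h' | h'
    · refine le_trans ?_ (ih (Nat.lt_succ_iff.mp h'))
      by_cases hb : ε (k + 1) = true <;> simp [slicePos, hb] <;> omega
    · have : m' = k + 1 := le_antisymm h h'
      subst this; exact le_refl _

lemma slicePos_snd_le (ε : ℕ → Bool) (z : ℕ) {m' m : ℕ} (h : m' ≤ m) :
    (slicePos ε z m').2 ≤ (slicePos ε z m).2 := by
  induction m with
  | zero => simp [Nat.le_zero.mp h]
  | succ k ih =>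
    rcases Nat.lt_or_ge m' (k + 1) with h' | h'
    · refine le_trans (ih (Nat.lt_succ_iff.mp h')) ?_
      by_cases hb : ε (k + 1) = true <;> simp [slicePos, hb] <;> omega
    · have : m' = k + 1 := le_antisymm h h'
      subst this; exact le_refl _

lemma inRange_mono {n : ℕ} {ε : ℕ → Bool} {z m' m : ℕ} (h : m' ≤ m)
    (hm : inRange n ε z m) : inRange n ε z m' :=
  ⟨le_trans hm.1 (slicePos_fst_le ε z h),
   le_trans (slicePos_snd_le ε z h) hm.2⟩

lemma exists_start (ε : ℕ → Bool) (v : Bool) (b : ℕ) (hb1 : 1 ≤ b) (hεb : ε b = v) :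
    ∃ a, 1 ≤ a ∧ a ≤ b ∧ (∀ m, a ≤ m → m ≤ b → ε m = v) ∧ (2 ≤ a → ε (a - 1) = !v) := by
  have hP : ∃ a, 1 ≤ a ∧ ∀ m, a ≤ m → m ≤ b → ε m = v := by
    exact ⟨b, hb1, fun m h1 h2 => by have : m = b := le_antisymm h2 h1; rw [this, hεb]⟩
  classical
  obtain ⟨ha1, hav⟩ := Nat.find_spec hP
  set a := Nat.find hP with ha
  have hab : a ≤ b :=
    Nat.find_min' hP ⟨hb1, fun m h1 h2 => by have : m = b := le_antisymm h2 h1; rw [this, hεb]⟩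
  refine ⟨a, ha1, hab, hav, fun h2 => ?_⟩
  by_contra hne
  have hv : ε (a - 1) = v := by
    cases hx : ε (a - 1) <;> cases v <;> simp_all
  have : ¬ (1 ≤ a - 1 ∧ ∀ m, a - 1 ≤ m → m ≤ b → ε m = v) :=
    Nat.find_min hP (by omega)
  apply this
  refine ⟨by omega, fun m h1 h2 => ?_⟩
  rcases Nat.lt_or_ge m a with hm | hm
  · have : m = a - 1 := by omega
    rw [this, hv]
  · exact hav m hm h2

lemma sum_split {e e' : ℕ} (h1 : 1 ≤ e) (hee : e ≤ e') (g : ℕ → ℤ) :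
    ∑ m ∈ Finset.Icc (e - 1) e', g m =
      g (e - 1) + (∑ m ∈ Finset.Icc e (e' - 1), g m + g e') := by
  have hA : Finset.Icc (e - 1) e' = insert (e - 1) (Finset.Icc e e') := by
    ext x; simp only [Finset.mem_Icc, Finset.mem_insert]; omega
  have hB : Finset.Icc e e' = insert e' (Finset.Icc e (e' - 1)) := by
    ext x; simp only [Finset.mem_Icc, Finset.mem_insert]; omega
  rw [hA, Finset.sum_insert (by simp only [Finset.mem_Icc]; omega), hB,
    Finset.sum_insert (by simp only [Finset.mem_Icc]; omega)]
  ring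

lemma left_pair {n : ℕ} {ε : ℕ → Bool} {c : ℤ × ℤ → ℤ} (hL : MemLPBW n ε c)
    {e e' z : ℕ} (h : IsLeftComp n ε e e') (hz : 1 ≤ z) (hzn : z + 1 ≤ n)
    (hs : SlicesComplete n ε e e' z) :
    c (slicePos ε (z + 1) (e - 1)) + c (slicePos ε (z + 1) e') ≤
      c (slicePos ε z (e - 1)) + c (slicePos ε z e') := by
  obtain ⟨hL1, hL2, -, -, -, -⟩ := hL
  have hsum := hL1 e e' z h hz hzn hs
  have h1 : 1 ≤ e := h.1
  have hee : e ≤ e' := h.2.1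
  rw [sum_split h1 hee, sum_split h1 hee] at hsum
  have hint : ∑ m ∈ Finset.Icc e (e' - 1), c (slicePos ε z m) ≤
      ∑ m ∈ Finset.Icc e (e' - 1), c (slicePos ε (z + 1) m) := by
    refine Finset.sum_le_sum fun m hm => ?_
    simp only [Finset.mem_Icc] at hm
    exact hL2 e e' z m h hz hzn hm.1 (by omega)
      (hs m (by simp only [Finset.mem_Icc]; omega)).1
      (hs (m + 1) (by simp only [Finset.mem_Icc]; omega)).1
  linarith

lemma right_pair {n : ℕ} {ε : ℕ → Bool} {c : ℤ × ℤ → ℤ} (hL : MemLPBW n ε c)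
    {e e' z : ℕ} (h : IsRightComp n ε e e') (hz : 1 ≤ z) (hzn : z + 1 ≤ n)
    (hs : SlicesComplete n ε e e' z) :
    c (slicePos ε z (e - 1)) + c (slicePos ε z e') ≤
      c (slicePos ε (z + 1) (e - 1)) + c (slicePos ε (z + 1) e') := by
  obtain ⟨-, -, hL3, hL4, -, -⟩ := hL
  have hsum := hL3 e e' z h hz hzn hs
  have h1 : 1 ≤ e := h.1
  have hee : e ≤ e' := h.2.1
  rw [sum_split h1 hee, sum_split h1 hee] at hsum
  have hint : ∑ m ∈ Finset.Icc e (e' - 1), c (slicePos ε (z + 1) m) ≤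
      ∑ m ∈ Finset.Icc e (e' - 1), c (slicePos ε z m) := by
    refine Finset.sum_le_sum fun m hm => ?_
    simp only [Finset.mem_Icc] at hm
    exact hL4 e e' z m h hz hzn hm.1 (by omega)
      (hs m (by simp only [Finset.mem_Icc]; omega)).2
      (hs (m + 1) (by simp only [Finset.mem_Icc]; omega)).2
  linarith

/-- (Lemma 8.1) If `c ∈ L_PBW(Q)` then for every left component `X` of `Q` (with both
slices complete), writing `T_z(X) = {x_1, ..., x_k}` (so `x_1` is the vertex at `m = e-1`
and `x_k` the one at `m = e'`): (I) `c_{i_1,j_1} ≤ c_{i_1+1,j_1+1}` and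
(II) `c_{i_k,j_k} ≥ c_{i_k+1,j_k+1}`; and for every right component (with both slices
complete): (III) `c_{i_1,j_1} ≥ c_{i_1+1,j_1+1}` and (IV) `c_{i_k,j_k} ≤ c_{i_k+1,j_k+1}`. -/
theorem LPBW_boundary_inequalities
    (n : ℕ) (ε : ℕ → Bool) (c : ℤ × ℤ → ℤ)
    (hc : ∀ i j : ℤ, 1 ≤ i → i ≤ j → j ≤ (n : ℤ) → 0 ≤ c (i, j))
    (hL : MemLPBW n ε c) :
    (∀ e e' z, IsLeftComp n ε e e' → 1 ≤ z → z + 1 ≤ n → SlicesComplete n ε e e' z →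
      c (slicePos ε z (e - 1)) ≤ c (slicePos ε (z + 1) (e - 1)) ∧
      c (slicePos ε (z + 1) e') ≤ c (slicePos ε z e')) ∧
    (∀ e e' z, IsRightComp n ε e e' → 1 ≤ z → z + 1 ≤ n → SlicesComplete n ε e e' z →
      c (slicePos ε (z + 1) (e - 1)) ≤ c (slicePos ε z (e - 1)) ∧
      c (slicePos ε z e') ≤ c (slicePos ε (z + 1) e')) := by
  have key : ∀ e : ℕ,
      (∀ e' z, IsLeftComp n ε e e' → 1 ≤ z → z + 1 ≤ n → SlicesComplete n ε e e' z →
        c (slicePos ε z (e - 1)) ≤ c (slicePos ε (z + 1) (e - 1))) ∧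
      (∀ e' z, IsRightComp n ε e e' → 1 ≤ z → z + 1 ≤ n → SlicesComplete n ε e e' z →
        c (slicePos ε (z + 1) (e - 1)) ≤ c (slicePos ε z (e - 1))) := by
    intro e
    induction e using Nat.strong_induction_on with
    | _ e IH =>
      constructor
      · intro e' z hcomp hz hzn hs
        obtain ⟨he1, hee, hen, hall, hprev, hnext⟩ := hcomp
        rcases Nat.lt_or_ge e 2 with h2 | h2
        · have he : e = 1 := by omega
          subst he
          simpa using hL.2.2.2.2.1 e' ⟨he1, hee, hen, hall, hprev, hnext⟩ z hz hzn
        · have hεprev := hprev h2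
          obtain ⟨a, ha1, hab, hav, hamax⟩ := exists_start ε true (e - 1) (by omega) hεprev
          have hR : IsRightComp n ε a (e - 1) :=
            ⟨ha1, hab, by omega, hav, by simpa using hamax, fun _ => by
              have he' : e - 1 + 1 = e := by omega
              rw [he']; exact hall e le_rfl hee⟩
          have hsR : SlicesComplete n ε a (e - 1) z := by
            intro m hm
            simp only [Finset.mem_Icc] at hm
            have h1 := hs (e - 1) (by simp only [Finset.mem_Icc]; omega)
            exact ⟨inRange_mono (by omega) h1.1, inRange_mono (by omega) h1.2⟩
          have hIII := (IH a (by omega)).2 (e - 1) z hR hz hzn hsR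
          have hpair := right_pair hL hR hz hzn hsR
          linarith
      · intro e' z hcomp hz hzn hs
        obtain ⟨he1, hee, hen, hall, hprev, hnext⟩ := hcomp
        rcases Nat.lt_or_ge e 2 with h2 | h2
        · have he : e = 1 := by omega
          subst he
          simpa using hL.2.2.2.2.2 e' ⟨he1, hee, hen, hall, hprev, hnext⟩ z hz hzn
        · have hεprev := hprev h2
          obtain ⟨a, ha1, hab, hav, hamax⟩ := exists_start ε false (e - 1) (by omega) hεprev
          have hLft : IsLeftComp n ε a (e - 1) :=
            ⟨ha1, hab, by omega, hav, by simpa using hamax, fun _ => by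
              have he' : e - 1 + 1 = e := by omega
              rw [he']; exact hall e le_rfl hee⟩
          have hsL : SlicesComplete n ε a (e - 1) z := by
            intro m hm
            simp only [Finset.mem_Icc] at hm
            have h1 := hs (e - 1) (by simp only [Finset.mem_Icc]; omega)
            exact ⟨inRange_mono (by omega) h1.1, inRange_mono (by omega) h1.2⟩
          have hI := (IH a (by omega)).1 (e - 1) z hLft hz hzn hsL
          have hpair := left_pair hL hLft hz hzn hsL
          linarith
  constructor
  · intro e e' z hcomp hz hzn hs
    have hI := (key e).1 e' z hcomp hz hzn hs
    have hpair := left_pair hL hcomp hz hzn hs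
    exact ⟨hI, by linarith⟩
  · intro e e' z hcomp hz hzn hs
    have hIII := (key e).2 e' z hcomp hz hzn hs
    have hpair := right_pair hL hcomp hz hzn hs
    exact ⟨hIII, by linarith⟩
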